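/- Let n be odd, k ≥ 3, and let f : 𝔽₂ⁿ → ℤ_{2^k}, f(x) = a₀(x) + 2a₁(x) + ⋯ + 2^{k−1}a_{k−1}(x), be a gbent function. Then its generalized Gray map ψ(f) : 𝔽₂ⁿ × 𝔽₂^{k−1} → 𝔽₂, ψ(f)(x, y₀,…,y_{k−2}) = ⊕_{i=0}^{k−2} aᵢ(x)yᵢ ⊕ a_{k−1}(x), is a (k−2)-plateaued Boolean function in n+k−1 variables; that is, W_{ψ(f)}(u, y) ∈ {0, 2^{(n+1)/2+k−2}, −2^{(n+1)/2+k−2}} for all (u, y) ∈ 𝔽₂ⁿ × 𝔽₂^{k−1}. -/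

import Mathlib

open Finset

/-- Boolean functions on `𝔽₂ⁿ`. -/
abbrev BF (n : ℕ) := (Fin n → ZMod 2) → ZMod 2

/-- Dot product on `𝔽₂ⁿ`. -/
def bdot {n : ℕ} (u x : Fin n → ZMod 2) : ZMod 2 := ∑ i, u i * x i

/-- Walsh–Hadamard transform of a Boolean function. -/
def walsh {n : ℕ} (g : BF n) (u : Fin n → ZMod 2) : ℤ :=
  ∑ x : Fin n → ZMod 2, (-1 : ℤ) ^ (g x + bdot u x).val

/-- Generalized Walsh–Hadamard transform of `f : 𝔽₂ⁿ → ℤ_q`. -/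
noncomputable def gwht {n q : ℕ} (f : (Fin n → ZMod 2) → ZMod q) (u : Fin n → ZMod 2) : ℂ :=
  ∑ x : Fin n → ZMod 2,
    Complex.exp (2 * Real.pi * Complex.I / (q : ℂ)) ^ (f x).val * (-1 : ℂ) ^ (bdot u x).val

/-- `f : 𝔽₂ⁿ → ℤ_q` is gbent if `|H_f(u)| = 2^{n/2}` for all `u`. -/
def IsGbent {n q : ℕ} (f : (Fin n → ZMod 2) → ZMod q) : Prop :=
  ∀ u, ‖gwht f u‖ = (2 : ℝ) ^ ((n : ℝ) / 2)

/-- A Boolean function (in an even number `n` of variables) is bent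
if `|W_g(u)| = 2^{n/2}` for all `u`. -/
def IsBent {n : ℕ} (g : BF n) : Prop := ∀ u, |walsh g u| = 2 ^ (n / 2)

/-- A Boolean function (in an odd number `n` of variables) is semi-bent if
`W_g(u) ∈ {0, ±2^{(n+1)/2}}` for all `u`. -/
def IsSemiBent {n : ℕ} (g : BF n) : Prop :=
  ∀ u, walsh g u = 0 ∨ walsh g u = 2 ^ ((n + 1) / 2) ∨ walsh g u = -2 ^ ((n + 1) / 2)

/-- `gd` is the dual of the bent function `g`: `W_g(u) = 2^{n/2}(-1)^{gd(u)}`. -/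
def IsDual {n : ℕ} (g gd : BF n) : Prop :=
  ∀ u, walsh g u = 2 ^ (n / 2) * (-1 : ℤ) ^ (gd u).val

/-- The `t`-th binary digit of `j`, as an element of `𝔽₂`. -/
def bit (t j : ℕ) : ZMod 2 := if Nat.testBit j t then 1 else 0

/-- Dot product `z_r · z_j` of the binary representations (of length `m`) of `r` and `j`. -/
def zdot (m r j : ℕ) : ZMod 2 := ∑ t ∈ Finset.range m, bit t r * bit t j

/-- Entry `(r, j)` of the Sylvester–Hadamard matrix `H_{2^m}`, i.e. `(-1)^{z_r · z_j}`. -/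
def hadRow (m r j : ℕ) : ℤ := (-1 : ℤ) ^ (zdot m r j).val

/-- `a 0, …, a (k-1)` are the Boolean coordinate functions of `f : 𝔽₂ⁿ → ℤ_{2^k}`:
`f = a₀ + 2a₁ + ⋯ + 2^{k-1}a_{k-1}`. -/
def coordExpand {n : ℕ} (k : ℕ) (a : ℕ → BF n) (f : (Fin n → ZMod 2) → ZMod (2 ^ k)) : Prop :=
  ∀ x, f x = ∑ j ∈ Finset.range k, (2 : ZMod (2 ^ k)) ^ j * ((a j x).val : ZMod (2 ^ k))

/-- The `i`-th component function `g_i = a_{k-1} ⊕ i₀a₀ ⊕ ⋯ ⊕ i_{k-2}a_{k-2}`. -/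
def component {n : ℕ} (k : ℕ) (a : ℕ → BF n) (i : ℕ) : BF n :=
  fun x => a (k - 1) x + ∑ t ∈ Finset.range (k - 1), bit t i * a t x

/-- The affine space `a0 ⊕ ⟨a 0, …, a (m-1)⟩` of Boolean functions. -/
def affSpan {n : ℕ} (m : ℕ) (a0 : BF n) (a : ℕ → BF n) : Set (BF n) :=
  {g | ∃ c : ℕ → ZMod 2, g = fun x => a0 x + ∑ t ∈ Finset.range m, c t * a t x}

/-- Walsh–Hadamard transform for Boolean functions on `𝔽₂ⁿ × 𝔽₂^m`. -/
def walshP {n m : ℕ} (F : (Fin n → ZMod 2) → (Fin m → ZMod 2) → ZMod 2)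
    (u : Fin n → ZMod 2) (v : Fin m → ZMod 2) : ℤ :=
  ∑ x : Fin n → ZMod 2, ∑ y : Fin m → ZMod 2, (-1 : ℤ) ^ (F x y + bdot u x + bdot v y).val
namespace GMP
open Polynomial

lemma two_eq_zero_zmod2X : (2 : (ZMod 2)[X]) = 0 := by
  have h1 : (2:(ZMod 2)[X]) = C 1 + C 1 := by norm_num
  rw [h1, ← C_add]
  have : (1 + 1 : ZMod 2) = 0 := by decide
  rw [this, map_zero]

noncomputable def QM (M : ℕ) : ℤ[X] := X ^ (2*M) + C 1

lemma QM_def (M : ℕ) : QM M = X ^ (2*M) + C 1 := rfl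

lemma QM_monic (M : ℕ) (hM : 0 < M) : (QM M).Monic :=
  monic_X_pow_add_C 1 (by omega)

lemma QM_natDegree (M : ℕ) : (QM M).natDegree = 2*M :=
  natDegree_X_pow_add_C

lemma QM_degree (M : ℕ) (hM : 0 < M) : (QM M).degree = (2*M : ℕ) := by
  rw [Polynomial.degree_eq_natDegree (QM_monic M hM).ne_zero, QM_natDegree]

lemma two_dvd_of_red_zero (q : ℤ[X]) (h : q.map (Int.castRingHom (ZMod 2)) = 0) :
    ∃ w, q = 2 * w := by
  have h2 : (C (2:ℤ)) ∣ q := by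
    rw [C_dvd_iff_dvd_coeff]
    intro i
    have := congrArg (fun p => Polynomial.coeff p i) h
    simp only [coeff_map, coeff_zero] at this
    have := (ZMod.intCast_zmod_eq_zero_iff_dvd (q.coeff i) 2).1 (by exact_mod_cast this)
    exact_mod_cast this
  obtain ⟨w, hw⟩ := h2
  exact ⟨w, by rw [hw]; norm_num⟩

lemma QM_red (M : ℕ) : (QM M).map (Int.castRingHom (ZMod 2)) = X^(2*M) + 1 := by
  simp [QM, Polynomial.map_add, Polynomial.map_pow, Polynomial.map_X]

lemma QM_dvd_of_two_mul (M : ℕ) (hM : 0 < M) {r : ℤ[X]} (h : QM M ∣ 2 * r) : QM M ∣ r := by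
  obtain ⟨c, hc⟩ := h
  have hmap := congrArg (fun p => p.map (Int.castRingHom (ZMod 2))) hc
  simp only [Polynomial.map_mul, Polynomial.map_ofNat, QM_red, two_eq_zero_zmod2X,
    zero_mul] at hmap
  have hc0 : c.map (Int.castRingHom (ZMod 2)) = 0 := by
    rcases mul_eq_zero.1 hmap.symm with h' | h'
    · exfalso
      have : (X^(2*M) + 1 : (ZMod 2)[X]) ≠ 0 := by
        intro hh
        have h0 := congrArg (fun p => p.coeff 0) hh
        simp [(show M ≠ 0 by omega)] at h0
      exact this h'
    · exact h'
  obtain ⟨c', hc'⟩ := two_dvd_of_red_zero c hc0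
  refine ⟨c', ?_⟩
  have : (2:ℤ[X]) * r = 2 * (QM M * c') := by rw [hc, hc']; ring
  have h2 : (2:ℤ[X]) ≠ 0 := by norm_num
  exact mul_left_cancel₀ h2 this


lemma one_eq_neg_one_zmod2X : (1 : (ZMod 2)[X]) = -1 := by
  linear_combination two_eq_zero_zmod2X

lemma X_sub_one_eq (h : True := trivial) : (X : (ZMod 2)[X]) + 1 = X - C 1 := by
  rw [map_one]
  nth_rewrite 1 [one_eq_neg_one_zmod2X]
  ring

lemma pow_reduce (M e : ℕ) (hM : 0 < M) :
    QM M ∣ X^e - C ((-1:ℤ)^(e/(2*M))) * X^(e % (2*M)) := by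
  have hdiv := Nat.div_add_mod e (2*M)
  set d := e / (2*M) with hd
  set r := e % (2*M) with hr
  have h1 : (X:ℤ[X])^e = ((X^(2*M))^d) * X^r := by
    rw [← pow_mul, ← pow_add, hdiv]
  have h2 : QM M ∣ (X^(2*M))^d - C ((-1:ℤ)^d) := by
    have := sub_dvd_pow_sub_pow (X^(2*M) : ℤ[X]) (-1) d
    have he : (X^(2*M) : ℤ[X]) - (-1) = QM M := by simp [QM]
    rw [he] at this
    simpa using this
  obtain ⟨c, hc⟩ := h2
  refine ⟨c * X^r, ?_⟩
  rw [h1]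
  have : ((X:ℤ[X])^(2*M))^d = C ((-1:ℤ)^d) + QM M * c := by rw [← hc]; ring
  rw [this]; ring

lemma comp_congr (M : ℕ) (hM : 0 < M) {p q : ℤ[X]} (h : QM M ∣ p - q) :
    QM M ∣ p.comp (X^(4*M-1)) - q.comp (X^(4*M-1)) := by
  obtain ⟨c, hc⟩ := h
  have hQc : QM M ∣ (QM M).comp (X^(4*M-1)) := by
    have : (QM M).comp (X^(4*M-1)) = X^((2*M)*(4*M-1)) + 1 := by
      simp [QM, add_comp, pow_comp, X_comp]
      rw [← pow_mul]
      ring_nf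
    rw [this]
    have h2 := sub_dvd_pow_sub_pow (X^(2*M) : ℤ[X]) (-1) (4*M-1)
    have he : (X^(2*M) : ℤ[X]) - (-1) = QM M := by simp [QM]
    rw [he, ← pow_mul] at h2
    have hodd : Odd (4*M-1) := by refine ⟨2*M-1, by omega⟩
    rw [hodd.neg_one_pow] at h2
    simpa [sub_neg_eq_add] using h2
  have : p.comp (X^(4*M-1)) - q.comp (X^(4*M-1)) = (p-q).comp (X^(4*M-1)) := by
    simp [sub_comp]
  rw [this, hc, mul_comp]
  exact Dvd.dvd.mul_right hQc _

lemma comp_eval_one (g : (ZMod 2)[X]) (e : ℕ) : (g.comp (X^e)).eval 1 = g.eval 1 := by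
  simp [eval_comp]

lemma X_add_one_prime : Prime ((X : (ZMod 2)[X]) + 1) := by
  rw [X_sub_one_eq]
  exact prime_X_sub_C 1

lemma X_add_one_dvd_iff (g : (ZMod 2)[X]) : ((X : (ZMod 2)[X]) + 1) ∣ g ↔ g.eval 1 = 0 := by
  rw [X_sub_one_eq, dvd_iff_isRoot]
  rfl

lemma lem_mult (M : ℕ) (hM : 0 < M) :
    ∀ (c : ℕ) (g : (ZMod 2)[X]), g ≠ 0 →
      ((X : (ZMod 2)[X]) + 1)^(2*c) ∣ g * g.comp (X^(4*M-1)) → ((X:(ZMod 2)[X])+1)^c ∣ g := by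
  intro c
  induction c with
  | zero => intro g _ _; simpa using one_dvd g
  | succ c ih =>
    intro g hg hdvd
    have h1 : ((X : (ZMod 2)[X]) + 1) ∣ g := by
      have hdvd1 : ((X : (ZMod 2)[X]) + 1) ∣ g * g.comp (X^(4*M-1)) :=
        dvd_trans (dvd_pow_self _ (by omega)) hdvd
      rcases (X_add_one_prime.dvd_mul).1 hdvd1 with h | h
      · exact h
      · rw [X_add_one_dvd_iff] at h ⊢
        rwa [comp_eval_one] at h
    obtain ⟨g₁, hg₁⟩ := h1
    have hgeom : (X:(ZMod 2)[X])^(4*M-1) + 1 = (X+1) * (∑ i ∈ Finset.range (4*M-1), X^i) := by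
      have := geom_sum_mul (X : (ZMod 2)[X]) (4*M-1)
      have hneg : (X:(ZMod 2)[X]) - 1 = X + 1 := by
        linear_combination -two_eq_zero_zmod2X
      have hneg2 : (X:(ZMod 2)[X])^(4*M-1) - 1 = X^(4*M-1) + 1 := by
        linear_combination -two_eq_zero_zmod2X
      rw [hneg, hneg2] at this
      rw [← this]; ring
    set u : (ZMod 2)[X] := ∑ i ∈ Finset.range (4*M-1), X^i with hu
    have hu1 : ¬ ((X:(ZMod 2)[X])+1) ∣ u := by
      rw [X_add_one_dvd_iff]
      have : u.eval 1 = ((4*M-1 : ℕ) : ZMod 2) := by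
        simp [hu, eval_finset_sum]
      rw [this]
      intro h0
      have := (ZMod.natCast_eq_zero_iff _ 2).1 h0
      omega
    -- now cancel (X+1)^2 and the unit u
    have hcompg : g.comp (X^(4*M-1)) = (X^(4*M-1)+1) * g₁.comp (X^(4*M-1)) := by
      rw [hg₁]; simp [add_comp, mul_comp, X_comp]
    have hprod : g * g.comp (X^(4*M-1)) = (X+1)^2 * (u * (g₁ * g₁.comp (X^(4*M-1)))) := by
      rw [hcompg, hgeom, hg₁]; ring
    rw [hprod] at hdvd
    have hX1 : ((X:(ZMod 2)[X])+1) ≠ 0 := X_add_one_prime.ne_zero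
    have hcancel : ((X:(ZMod 2)[X])+1)^(2*c) ∣ u * (g₁ * g₁.comp (X^(4*M-1))) := by
      have h2 : ((X:(ZMod 2)[X])+1)^(2*(c+1)) = (X+1)^2 * (X+1)^(2*c) := by
        rw [← pow_add]; ring_nf
      rw [h2] at hdvd
      exact (mul_dvd_mul_iff_left (pow_ne_zero 2 hX1)).1 hdvd
    have hg₁dvd : ((X:(ZMod 2)[X])+1)^(2*c) ∣ g₁ * g₁.comp (X^(4*M-1)) :=
      X_add_one_prime.pow_dvd_of_dvd_mul_left _ hu1 hcancel
    have hg₁ne : g₁ ≠ 0 := by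
      intro h0; rw [h0, mul_zero] at hg₁; exact hg hg₁
    have := ih g₁ hg₁ne hg₁dvd
    rw [hg₁, pow_succ, mul_comm (((X:(ZMod 2)[X])+1)^c) (X+1)]
    exact mul_dvd_mul_left _ this

-- Freshman's dream facts over (ZMod 2)[X], for M a power of two
lemma freshman (κ : ℕ) : ((X : (ZMod 2)[X]) + 1)^(2^κ) = X^(2^κ) + 1 := by
  haveI : Fact (Nat.Prime 2) := ⟨Nat.prime_two⟩
  have := add_pow_char_pow (R := (ZMod 2)[X]) X 1 2 κ
  simpa using this

-- The step lemma: extraction of a factor (1 - X^M) modulo QM M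
lemma step_poly (κ : ℕ) (N : ℕ) (p : ℤ[X])
    (h : QM (2^κ) ∣ p * p.comp (X^(4*2^κ-1)) - 2^(N+1)) :
    ∃ γ : ℤ[X], QM (2^κ) ∣ p * (1 + X^(2^κ)) - 2*γ := by
  set M := 2^κ with hMdef
  have hM : 0 < M := Nat.pow_pos (n := κ) (by norm_num)
  set red := fun q : ℤ[X] => q.map (Int.castRingHom (ZMod 2)) with hred
  -- (X+1)^M divides red p
  have hdvdM : ((X : (ZMod 2)[X])+1)^M ∣ red p := by
    by_cases hp0 : red p = 0
    · rw [hp0]; exact dvd_zero _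
    · apply lem_mult M hM M (red p) hp0
      have hmap : ((X:(ZMod 2)[X])+1)^(2*M) ∣ red p * (red p).comp (X^(4*M-1)) := by
        obtain ⟨c, hc⟩ := h
        have := congrArg red hc
        simp only [hred, Polynomial.map_mul, Polynomial.map_sub, Polynomial.map_pow,
          Polynomial.map_ofNat, Polynomial.map_comp, Polynomial.map_X, QM_red] at this
        have h2z : ((2:(ZMod 2)[X]))^(N+1) = 0 := by
          rw [two_eq_zero_zmod2X]; exact zero_pow (by omega)
        rw [h2z, sub_zero] at this
        rw [show ((X:(ZMod 2)[X])+1)^(2*M) = X^(2*M)+1 by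
          rw [show 2*M = 2^(κ+1) by rw [hMdef]; ring, freshman (κ+1)]]
        exact ⟨_, this⟩
      exact hmap
  obtain ⟨gbar, hgbar⟩ := hdvdM
  obtain ⟨g, hg⟩ := Polynomial.map_surjective (Int.castRingHom (ZMod 2))
    ZMod.intCast_surjective gbar
  -- p = (X-1)^M * g + 2*h
  have hsplit : ∃ h2 : ℤ[X], p = (X-1)^M * g + 2*h2 := by
    have : red (p - (X-1)^M * g) = 0 := by
      simp only [hred, Polynomial.map_sub, Polynomial.map_mul, Polynomial.map_pow,
        Polynomial.map_one, Polynomial.map_X, hg]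
      have : ((X:(ZMod 2)[X]) - 1) = X + 1 := by linear_combination -two_eq_zero_zmod2X
      rw [this, ← hgbar]
      simp [hred]
    obtain ⟨w, hw⟩ := two_dvd_of_red_zero _ this
    exact ⟨w, by linear_combination hw⟩
  obtain ⟨h2, hh2⟩ := hsplit
  -- (X-1)^M * (1+X^M) = QM M + 2*w
  have hw : ∃ w : ℤ[X], (X-1)^M * (1+X^(M:ℕ)) = QM M + 2*w := by
    have : red ((X-1)^M * (1+X^(M:ℕ)) - QM M) = 0 := by
      simp only [hred, Polynomial.map_sub, Polynomial.map_mul, Polynomial.map_pow,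
        Polynomial.map_one, Polynomial.map_add, Polynomial.map_X, QM_red]
      have h1 : ((X:(ZMod 2)[X]) - 1) = X + 1 := by linear_combination -two_eq_zero_zmod2X
      have h2' : (1 + (X:(ZMod 2)[X])^M) = (X+1)^M := by
        rw [hMdef, freshman κ]; ring
      rw [h1, h2', ← pow_add]
      rw [show M + M = 2^(κ+1) by rw [hMdef]; ring, freshman (κ+1),
        show (2:ℕ)^(κ+1) = 2*M by rw [hMdef]; ring]
      ring
    obtain ⟨w, hw⟩ := two_dvd_of_red_zero _ this
    exact ⟨w, by linear_combination hw⟩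
  obtain ⟨w, hweq⟩ := hw
  refine ⟨w*g + h2*(1+X^(M:ℕ)), ?_⟩
  have : p * (1 + X^(M:ℕ)) - 2*(w*g + h2*(1+X^(M:ℕ))) = QM M * g := by
    rw [hh2]
    linear_combination (g : ℤ[X]) * hweq
  rw [this]
  exact Dvd.intro _ rfl

lemma sum_sq_eq_one {m2 : ℕ} {g : ℕ → ℤ} (h : ∑ v ∈ Finset.range m2, (g v)^2 = 1) :
    ∃ j ∈ Finset.range m2, (g j = 1 ∨ g j = -1) ∧
      ∀ i ∈ Finset.range m2, i ≠ j → g i = 0 := by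
  have hex : ∃ j ∈ Finset.range m2, (g j)^2 ≠ 0 := by
    by_contra hall
    push_neg at hall
    have : ∑ v ∈ Finset.range m2, (g v)^2 = 0 :=
      Finset.sum_eq_zero (by intro i hi; exact hall i hi)
    omega
  obtain ⟨j, hj, hj2⟩ := hex
  have hle : (g j)^2 ≤ ∑ v ∈ Finset.range m2, (g v)^2 :=
    Finset.single_le_sum (f := fun v => (g v)^2) (fun i _ => sq_nonneg _) hj
  have hsq : (g j)^2 = 1 := by
    have h0 : 0 ≤ (g j)^2 := sq_nonneg _
    omega
  have hrest : ∑ v ∈ (Finset.range m2).erase j, (g v)^2 = 0 := by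
    have h1 : (g j)^2 + ∑ v ∈ (Finset.range m2).erase j, (g v)^2
        = ∑ v ∈ Finset.range m2, (g v)^2 :=
      Finset.add_sum_erase (Finset.range m2) (fun v => (g v)^2) hj
    have h2 : (0:ℤ) ≤ ∑ v ∈ (Finset.range m2).erase j, (g v)^2 :=
      Finset.sum_nonneg (fun v _ => sq_nonneg _)
    omega
  have hzero := (Finset.sum_eq_zero_iff_of_nonneg
    (fun v _ => sq_nonneg (g v))).1 hrest
  refine ⟨j, hj, ?_, ?_⟩
  · have hunit : IsUnit (g j) := IsUnit.of_mul_eq_one (g j) (by nlinarith [hsq])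
    exact Int.isUnit_iff.1 hunit
  · intro i hi hij
    have := hzero i (Finset.mem_erase.2 ⟨hij, hi⟩)
    exact pow_eq_zero_iff (n := 2) (by norm_num) |>.1 this

lemma arith_mod (M v w : ℕ) (hM : 0 < M) (hv : v < 2*M) (hw : w < 2*M) :
    ((v + w*(4*M-1)) % (2*M) = 0) ↔ v = w := by
  have h1 : w*(4*M-1) = 4*(M*w) - w := by
    rw [Nat.mul_sub, mul_one, show w*(4*M) = 4*(M*w) by ring]
  have hq : w ≤ M*w := Nat.le_mul_of_pos_left w hM
  rcases le_or_gt w v with hvw | hvw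
  · have hE : v + w*(4*M-1) = (v - w) + (2*M)*(2*w) := by
      rw [h1, show (2*M)*(2*w) = 4*(M*w) by ring]; omega
    rw [hE, Nat.add_mul_mod_self_left, Nat.mod_eq_of_lt (by omega)]
    omega
  · have hq2 : M ≤ M*w := Nat.le_mul_of_pos_right M (by omega : 0 < w)
    have hE : v + w*(4*M-1) = (2*M - (w - v)) + (2*M)*(2*w-1) := by
      rw [h1, show (2*M)*(2*w-1) = 4*(M*w) - 2*M by
        rw [Nat.mul_sub, mul_one, show (2*M)*(2*w) = 4*(M*w) by ring]]
      omega
    rw [hE, Nat.add_mul_mod_self_left, Nat.mod_eq_of_lt (by omega)]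
    omega

lemma arith_div (M v : ℕ) (hM : 0 < M) :
    (v + v*(4*M-1)) / (2*M) = 2*v := by
  have h1 : v*(4*M-1) = 4*(M*v) - v := by
    rw [Nat.mul_sub, mul_one, show v*(4*M) = 4*(M*v) by ring]
  have hq : v ≤ M*v := Nat.le_mul_of_pos_left v hM
  have hE : v + v*(4*M-1) = (2*M)*(2*v) := by
    rw [h1, show (2*M)*(2*v) = 4*(M*v) by ring]; omega
  rw [hE, Nat.mul_div_cancel_left _ (by omega : 0 < 2*M)]

lemma desc_base (M : ℕ) (hM : 0 < M) (p : ℤ[X])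
    (h : QM M ∣ p * p.comp (X^(4*M-1)) - 1) :
    ∃ (s : ℤ) (j : ℕ), (s = 1 ∨ s = -1) ∧ QM M ∣ p - C s * X^j := by
  have hmon := QM_monic M hM
  set t : ℕ → ℤ := fun v => (p %ₘ QM M).coeff v with ht
  have hdegr : (p %ₘ QM M).degree < ((2*M : ℕ) : WithBot ℕ) := by
    rw [← QM_degree M hM]; exact degree_modByMonic_lt p hmon
  have hnatdeg : (p %ₘ QM M).natDegree < 2*M := by
    rcases eq_or_ne (p %ₘ QM M) 0 with h0 | h0
    · rw [h0]; simp; omega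
    · exact (Polynomial.natDegree_lt_iff_degree_lt h0).2 hdegr
  set r : ℤ[X] := ∑ v ∈ Finset.range (2*M), C (t v) * X^v with hrdef
  have hr_eq : p %ₘ QM M = r := by
    conv_lhs => rw [Polynomial.as_sum_range' (p %ₘ QM M) (2*M) hnatdeg]
    exact Finset.sum_congr rfl fun v _ => (C_mul_X_pow_eq_monomial).symm
  have hpr : QM M ∣ p - r := by
    rw [← hr_eq]
    have := Polynomial.modByMonic_add_div p (QM M)
    exact ⟨p /ₘ QM M, by linear_combination -this⟩
  have hrr : QM M ∣ r * r.comp (X^(4*M-1)) - 1 := by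
    have hc := comp_congr M hM hpr
    have hd : QM M ∣ p * p.comp (X^(4*M-1)) - r * r.comp (X^(4*M-1)) := by
      have heq : p * p.comp (X^(4*M-1)) - r * r.comp (X^(4*M-1))
          = (p - r) * p.comp (X^(4*M-1))
            + r * (p.comp (X^(4*M-1)) - r.comp (X^(4*M-1))) := by ring
      rw [heq]; exact dvd_add (hpr.mul_right _) (hc.mul_left _)
    have heq2 : r * r.comp (X^(4*M-1)) - 1
        = (p * p.comp (X^(4*M-1)) - 1) - (p * p.comp (X^(4*M-1)) - r * r.comp (X^(4*M-1))) := by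
      ring
    rw [heq2]; exact dvd_sub h hd
  have hcomp_sum : r.comp (X^(4*M-1)) = ∑ w ∈ Finset.range (2*M),
      C (t w) * X^(w*(4*M-1)) := by
    rw [hrdef]
    simp only [Polynomial.comp, eval₂_finset_sum, eval₂_mul, eval₂_C, eval₂_X_pow]
    apply Finset.sum_congr rfl
    intro w _
    rw [← pow_mul, Nat.mul_comm]
  have hprod : r * r.comp (X^(4*M-1)) = ∑ v ∈ Finset.range (2*M), ∑ w ∈ Finset.range (2*M),
      C (t v * t w) * X^(v + w*(4*M-1)) := by
    rw [hcomp_sum, hrdef, Finset.sum_mul_sum]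
    apply Finset.sum_congr rfl; intro v _
    apply Finset.sum_congr rfl; intro w _
    rw [C_mul, pow_add]; ring
  set G : ℤ[X] := ∑ v ∈ Finset.range (2*M), ∑ w ∈ Finset.range (2*M),
      C (t v * t w * (-1)^((v + w*(4*M-1))/(2*M))) * X^((v + w*(4*M-1)) % (2*M))
    with hG
  have hGcong : QM M ∣ r * r.comp (X^(4*M-1)) - G := by
    rw [hprod, hG, ← Finset.sum_sub_distrib]
    apply Finset.dvd_sum; intro v hv
    rw [← Finset.sum_sub_distrib]
    apply Finset.dvd_sum; intro w hw
    have hred := pow_reduce M (v + w*(4*M-1)) hM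
    have heq : C (t v * t w) * X^(v + w*(4*M-1))
        - C (t v * t w * (-1)^((v + w*(4*M-1))/(2*M))) * X^((v + w*(4*M-1)) % (2*M))
        = C (t v * t w) *
          (X^(v + w*(4*M-1)) - C ((-1:ℤ)^((v + w*(4*M-1))/(2*M))) * X^((v + w*(4*M-1)) % (2*M))) := by
      simp only [C_mul]; ring
    rw [heq]
    exact hred.mul_left _
  have hG1 : QM M ∣ G - 1 := by
    have heq : G - 1 = (r * r.comp (X^(4*M-1)) - 1) - (r * r.comp (X^(4*M-1)) - G) := by ring
    rw [heq]; exact dvd_sub hrr hGcong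
  have hGdeg : (G - 1).degree < (QM M).degree := by
    rw [QM_degree M hM]
    apply lt_of_le_of_lt (degree_sub_le _ _)
    rw [max_lt_iff]
    constructor
    · apply lt_of_le_of_lt (degree_sum_le _ _)
      rw [Finset.sup_lt_iff (by exact WithBot.bot_lt_coe _)]
      intro v hv
      apply lt_of_le_of_lt (degree_sum_le _ _)
      rw [Finset.sup_lt_iff (by exact WithBot.bot_lt_coe _)]
      intro w hw
      apply lt_of_le_of_lt (degree_mul_le _ _)
      have h1 : (C (t v * t w * (-1)^((v + w*(4*M-1))/(2*M)))).degree ≤ 0 :=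
        degree_C_le
      have h2 : ((X : ℤ[X])^((v + w*(4*M-1)) % (2*M))).degree = ((v + w*(4*M-1)) % (2*M) : ℕ) :=
        degree_X_pow _
      calc _ ≤ 0 + (((v + w*(4*M-1)) % (2*M) : ℕ) : WithBot ℕ) := add_le_add h1 (le_of_eq h2)
        _ = (((v + w*(4*M-1)) % (2*M) : ℕ) : WithBot ℕ) := by rw [zero_add]
        _ < ((2*M : ℕ) : WithBot ℕ) := by
            exact_mod_cast Nat.mod_lt _ (by omega : 0 < 2*M)
    · apply lt_of_le_of_lt degree_one_le
      exact_mod_cast (by omega : 0 < 2*M)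
  have hGeq : G = 1 := by
    have := eq_zero_of_dvd_of_degree_lt hG1 hGdeg
    linear_combination this
  have hsumsq : ∑ v ∈ Finset.range (2*M), (t v)^2 = 1 := by
    have hco : G.coeff 0 = 1 := by rw [hGeq]; simp
    have hGc : G.coeff 0 = ∑ v ∈ Finset.range (2*M), ∑ w ∈ Finset.range (2*M),
        (C (t v * t w * (-1)^((v + w*(4*M-1))/(2*M)))
          * X^((v + w*(4*M-1)) % (2*M))).coeff 0 := by
      rw [hG, Polynomial.finset_sum_coeff]
      apply Finset.sum_congr rfl; intro v _
      rw [Polynomial.finset_sum_coeff]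
    have hterm : ∀ v ∈ Finset.range (2*M), ∀ w ∈ Finset.range (2*M),
        (C (t v * t w * (-1)^((v + w*(4*M-1))/(2*M)))
          * X^((v + w*(4*M-1)) % (2*M))).coeff 0
        = if w = v then (t v)^2 else 0 := by
      intro v hv w hw
      rw [coeff_C_mul, coeff_X_pow]
      rcases eq_or_ne w v with hvw | hvw
      · subst hvw
        have hc0 : (w + w*(4*M-1)) % (2*M) = 0 :=
          (arith_mod M w w hM (Finset.mem_range.1 hv) (Finset.mem_range.1 hw)).2 rfl
        have hpow : (-1 : ℤ)^(2*w) = 1 := by rw [pow_mul]; norm_num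
        rw [hc0, arith_div M w hM, hpow]
        norm_num
        ring
      · have hne : (v + w*(4*M-1)) % (2*M) ≠ 0 := fun h0 =>
          hvw ((arith_mod M v w hM (Finset.mem_range.1 hv) (Finset.mem_range.1 hw)).1 h0).symm
        rw [if_neg (fun h0 => hne h0.symm : ¬((0:ℕ) = (v + w*(4*M-1)) % (2*M))), if_neg hvw]
        ring
    have hstep : ∑ v ∈ Finset.range (2*M), ∑ w ∈ Finset.range (2*M),
        (C (t v * t w * (-1)^((v + w*(4*M-1))/(2*M)))
          * X^((v + w*(4*M-1)) % (2*M))).coeff 0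
        = ∑ v ∈ Finset.range (2*M), (t v)^2 := by
      apply Finset.sum_congr rfl; intro v hv
      rw [Finset.sum_congr rfl (fun w hw => hterm v hv w hw)]
      rw [Finset.sum_ite_eq' (Finset.range (2*M)) v (fun _ => (t v)^2), if_pos hv]
    rw [hGc, hstep] at hco
    exact hco
  obtain ⟨j, hjmem, hjval, hjzero⟩ := sum_sq_eq_one hsumsq
  refine ⟨t j, j, hjval, ?_⟩
  have hreq : r = C (t j) * X^j := by
    rw [hrdef]
    apply Finset.sum_eq_single_of_mem j hjmem
    intro v hv hvj
    rw [hjzero v hv hvj, map_zero, zero_mul]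
  rw [← hreq]
  exact hpr

-- ### The quotient ring layer
section RingLayer

variable (M : ℕ)

local notation "R" => AdjoinRoot (QM M)

lemma theta_pow : (AdjoinRoot.root (QM M))^(2*M) = -1 := by
  have h1 : (AdjoinRoot.root (QM M))^(2*M) + 1 = 0 := by
    have h0 := AdjoinRoot.mk_self (f := QM M)
    calc (AdjoinRoot.root (QM M))^(2*M) + 1
          = AdjoinRoot.mk (QM M) (X^(2*M) + C 1) := by
          rw [map_add, map_pow, AdjoinRoot.mk_X, Polynomial.C_1, map_one]
      _ = 0 := h0
  linear_combination h1

lemma theta_sq_identity : (1 - (AdjoinRoot.root (QM M))^M) * (1 + (AdjoinRoot.root (QM M))^M)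
    = 2 := by
  have hthis := theta_pow M
  have hMM : (AdjoinRoot.root (QM M))^M * (AdjoinRoot.root (QM M))^M
      = (AdjoinRoot.root (QM M))^(2*M) := by
    rw [← pow_add]; congr 1; ring
  linear_combination -hthis - hMM

lemma conj_root_eval (hM : 0 < M) :
    Polynomial.eval₂ (Int.castRingHom R) ((AdjoinRoot.root (QM M))^(4*M-1)) (QM M) = 0 := by
  have hodd : Odd (4*M-1) := ⟨2*M-1, by omega⟩
  have h1 : (((AdjoinRoot.root (QM M))^(4*M-1)))^(2*M) = -1 := by
    rw [← pow_mul, show (4*M-1)*(2*M) = (2*M)*(4*M-1) by ring, pow_mul, theta_pow M,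
      hodd.neg_one_pow]
  show Polynomial.eval₂ (Int.castRingHom R) ((AdjoinRoot.root (QM M))^(4*M-1))
      (X^(2*M) + C 1) = 0
  rw [eval₂_add, eval₂_pow, eval₂_X, eval₂_C, h1]
  simp

noncomputable def conjR (hM : 0 < M) : R →+* R :=
  AdjoinRoot.lift (Int.castRingHom R) ((AdjoinRoot.root (QM M))^(4*M-1)) (conj_root_eval M hM)

lemma conjR_mk (hM : 0 < M) (p : ℤ[X]) :
    conjR M hM (AdjoinRoot.mk (QM M) p) = AdjoinRoot.mk (QM M) (p.comp (X^(4*M-1))) := by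
  rw [conjR, AdjoinRoot.lift_mk]
  rw [← AdjoinRoot.aeval_eq]
  rw [show (aeval (AdjoinRoot.root (QM M))) (p.comp (X^(4*M-1)))
      = eval₂ (algebraMap ℤ R) (AdjoinRoot.root (QM M)) (p.comp (X^(4*M-1))) from rfl]
  rw [eval₂_comp, eval₂_pow, eval₂_X]
  rfl

lemma mk_dvd_iff (hM : 0 < M) (p : ℤ[X]) :
    AdjoinRoot.mk (QM M) p = 0 ↔ QM M ∣ p := by
  constructor
  · intro h
    have := (AdjoinRoot.mk_eq_mk (f := QM M) (g := p) (h := 0)).1 (by simpa using h)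
    simpa using this
  · intro h
    have := (AdjoinRoot.mk_eq_mk (f := QM M) (g := p) (h := 0)).2 (by simpa using h)
    simpa using this

lemma two_cancel (hM : 0 < M) {x y : R} (h : 2*x = 2*y) : x = y := by
  obtain ⟨p, hp⟩ := AdjoinRoot.mk_surjective x
  obtain ⟨q, hq⟩ := AdjoinRoot.mk_surjective y
  rw [← hp, ← hq]
  rw [← hp, ← hq] at h
  have h2 : AdjoinRoot.mk (QM M) (2*p - 2*q) = 0 := by
    rw [map_sub]
    rw [show ((2:ℤ[X])*p) = ((2:ℤ[X]))*p from rfl]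
    rw [map_mul, map_mul]
    rw [show ((AdjoinRoot.mk (QM M)) (2:ℤ[X])) = (2:R) from map_ofNat _ 2]
    rw [h]
    ring
  have hdvd := (mk_dvd_iff M hM _).1 h2
  have : QM M ∣ 2*(p - q) := by
    rw [show (2:ℤ[X])*(p-q) = 2*p - 2*q by ring]
    exact hdvd
  have := QM_dvd_of_two_mul M hM this
  rw [AdjoinRoot.mk_eq_mk]
  exact this

lemma prod_conj_mk (hM : 0 < M) (p : ℤ[X]) (N : ℕ)
    (h : AdjoinRoot.mk (QM M) p * conjR M hM (AdjoinRoot.mk (QM M) p) = 2^N) :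
    QM M ∣ p * p.comp (X^(4*M-1)) - 2^N := by
  rw [conjR_mk M hM] at h
  rw [← map_mul] at h
  have h2N : ((AdjoinRoot.mk (QM M)) ((2:ℤ[X])^N)) = (2:R)^N := by
    rw [map_pow, show ((AdjoinRoot.mk (QM M)) (2:ℤ[X])) = (2:R) from map_ofNat _ 2]
  have : AdjoinRoot.mk (QM M) (p * p.comp (X^(4*M-1)) - 2^N) = 0 := by
    rw [map_sub, h, h2N]
    ring
  exact (mk_dvd_iff M hM _).1 this

end RingLayer

-- ### The descent theorem
theorem desc (κ : ℕ) : ∀ (N : ℕ) (α : AdjoinRoot (QM (2^κ))),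
    α * conjR (2^κ) (Nat.pow_pos (n := κ) (by norm_num)) α = 2^N →
    ∃ (s : ℤ) (j : ℕ), (s = 1 ∨ s = -1) ∧
      α = (s : AdjoinRoot (QM (2^κ))) * (AdjoinRoot.root (QM (2^κ)))^j
            * (1 - (AdjoinRoot.root (QM (2^κ)))^(2^κ))^N := by
  set M := 2^κ with hMdef
  have hM : 0 < M := Nat.pow_pos (n := κ) (by norm_num)
  intro N
  induction N with
  | zero =>
    intro α hα
    obtain ⟨p, hp⟩ := AdjoinRoot.mk_surjective α
    rw [← hp] at hα ⊢
    have hdvd := prod_conj_mk M hM p 0 hα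
    rw [pow_zero] at hdvd
    obtain ⟨s, j, hs, hsj⟩ := desc_base M hM p hdvd
    refine ⟨s, j, hs, ?_⟩
    rw [pow_zero, mul_one]
    have hmkeq := (AdjoinRoot.mk_eq_mk (f := QM M)).2 hsj
    rw [hmkeq, map_mul, map_pow, AdjoinRoot.mk_X,
      show (C s : ℤ[X]) = (s : ℤ[X]) from by simp, map_intCast]
  | succ N ih =>
    intro α hα
    obtain ⟨p, hp⟩ := AdjoinRoot.mk_surjective α
    have hdvd := prod_conj_mk M hM p (N+1) (by rw [hp]; exact hα)
    obtain ⟨γ, hγ⟩ := step_poly κ N p hdvd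
    set θ := AdjoinRoot.root (QM M) with hθ
    set g := AdjoinRoot.mk (QM M) γ with hg
    have hfact : α = (1 - θ^M) * g := by
      have h1 : α * (1 + θ^M) = 2 * g := by
        rw [← hp, hg]
        have : AdjoinRoot.mk (QM M) (p * (1 + X^M) - 2*γ) = 0 := (mk_dvd_iff M hM _).2 hγ
        rw [map_sub, map_mul, map_add, map_one, map_pow, AdjoinRoot.mk_X, map_mul] at this
        rw [show ((AdjoinRoot.mk (QM M)) (2:ℤ[X])) = (2:AdjoinRoot (QM M)) from map_ofNat _ 2]
          at this
        linear_combination this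
      have h2 : (1 - θ^M) * (1 + θ^M) = 2 := theta_sq_identity M
      have h3 : 2*α = 2*((1 - θ^M) * g) := by
        calc 2*α = ((1 - θ^M) * (1 + θ^M)) * α := by rw [h2]
          _ = (1 - θ^M) * (α * (1 + θ^M)) := by ring
          _ = (1 - θ^M) * (2*g) := by rw [h1]
          _ = 2*((1 - θ^M) * g) := by ring
      exact two_cancel M hM h3
    have hconjfact : conjR M hM (1 - θ^M) = 1 + θ^M := by
      have hconjθ : conjR M hM θ = θ^(4*M-1) := by
        rw [hθ, ← AdjoinRoot.mk_X, conjR_mk M hM, X_comp, map_pow]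
      rw [map_sub, map_one, map_pow, hconjθ, ← pow_mul]
      have : θ^((4*M-1)*M) = -θ^M := by
        have h4 : (4*M-1)*M = (2*M)*(2*M-1) + M := by
          cases M with
          | zero => rfl
          | succ m =>
            have e1 : 4*(m+1)-1 = 4*m+3 := by omega
            have e2 : 2*(m+1)-1 = 2*m+1 := by omega
            rw [e1, e2]; ring
        rw [h4, pow_add, pow_mul, theta_pow M]
        have hodd : Odd (2*M-1) := ⟨M-1, by omega⟩
        rw [hodd.neg_one_pow]
        ring
      rw [this]
      ring
    have hγγ : g * conjR M hM g = 2^N := by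
      have h5 : α * conjR M hM α = 2 * (g * conjR M hM g) := by
        rw [hfact, map_mul, hconjfact]
        have h2 : (1 - θ^M) * (1 + θ^M) = 2 := theta_sq_identity M
        calc (1 - θ^M) * g * ((1 + θ^M) * conjR M hM g)
            = ((1 - θ^M) * (1 + θ^M)) * (g * conjR M hM g) := by ring
          _ = 2 * (g * conjR M hM g) := by rw [h2]
      rw [hα, pow_succ] at h5
      have : 2 * (2:AdjoinRoot (QM M))^N = 2 * (g * conjR M hM g) := by
        rw [← h5]; ring
      exact (two_cancel M hM this).symm
    obtain ⟨s, j, hs, hsj⟩ := ih g hγγ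
    refine ⟨s, j, hs, ?_⟩
    rw [hfact, hsj, pow_succ]
    ring

lemma theta_reduce (M : ℕ) (hM : 0 < M) (e : ℕ) :
    (AdjoinRoot.root (QM M))^e
      = (((-1:ℤ)^(e/(2*M)) : ℤ) : AdjoinRoot (QM M)) * (AdjoinRoot.root (QM M))^(e % (2*M)) := by
  have hred := pow_reduce M e hM
  have hmk := (AdjoinRoot.mk_eq_mk (f := QM M)).2 hred
  rw [map_mul, map_pow, AdjoinRoot.mk_X,
    show (C ((-1:ℤ)^(e/(2*M))) : ℤ[X]) = (((-1:ℤ)^(e/(2*M)) : ℤ) : ℤ[X]) from by simp,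
    map_intCast, map_pow, AdjoinRoot.mk_X] at hmk
  exact hmk

lemma mul_conj_of_dvd (M : ℕ) (hM : 0 < M) (p : ℤ[X]) (N : ℕ)
    (h : QM M ∣ p * p.comp (X^(4*M-1)) - 2^N) :
    AdjoinRoot.mk (QM M) p * conjR M hM (AdjoinRoot.mk (QM M) p) = 2^N := by
  rw [conjR_mk M hM, ← map_mul]
  have h0 : AdjoinRoot.mk (QM M) (p * p.comp (X^(4*M-1)) - 2^N) = 0 := (mk_dvd_iff M hM _).2 h
  rw [map_sub, map_pow, show ((AdjoinRoot.mk (QM M)) (2:ℤ[X])) = 2 from map_ofNat _ 2] at h0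
  linear_combination h0

lemma sign_mul {a b : ℤ} (ha : a = 1 ∨ a = -1) (hb : b = 1 ∨ b = -1) :
    a * b = 1 ∨ a * b = -1 := by
  rcases ha with rfl | rfl <;> rcases hb with rfl | rfl <;> norm_num

lemma degree_coeff_sum_lt (m2 : ℕ) (hm2 : 0 < m2) (t : ℕ → ℤ) :
    (∑ i ∈ Finset.range m2, C (t i) * X^i).degree < ((m2 : ℕ) : WithBot ℕ) := by
  apply lt_of_le_of_lt (degree_sum_le _ _)
  rw [Finset.sup_lt_iff (by exact WithBot.bot_lt_coe _)]
  intro i hi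
  apply lt_of_le_of_lt (degree_mul_le _ _)
  calc (C (t i)).degree + ((X:ℤ[X])^i).degree ≤ 0 + (i:ℕ) :=
        add_le_add degree_C_le (le_of_eq (degree_X_pow _))
    _ = ((i:ℕ) : WithBot ℕ) := by rw [zero_add]
    _ < ((m2:ℕ) : WithBot ℕ) := by exact_mod_cast Finset.mem_range.1 hi

theorem ntcore (κ : ℕ) (n : ℕ) (hn : Odd n) (t : ℕ → ℤ)
    (h : QM (2^κ) ∣ (∑ i ∈ Finset.range (2*2^κ), C (t i) * X^i)
      * ((∑ i ∈ Finset.range (2*2^κ), C (t i) * X^i).comp (X^(4*2^κ-1))) - 2^n) :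
    ∀ i, i < 2*2^κ → t i = 0 ∨ t i = 2^((n-1)/2) ∨ t i = -2^((n-1)/2) := by
  set M := 2^κ with hMdef
  have hM : 0 < M := Nat.pow_pos (n := κ) (by norm_num)
  set pT : ℤ[X] := ∑ i ∈ Finset.range (2*M), C (t i) * X^i with hpT
  set θ := AdjoinRoot.root (QM M) with hθ
  have hα := mul_conj_of_dvd M hM pT n h
  obtain ⟨s, j, hs, hsj⟩ := desc κ n (AdjoinRoot.mk (QM M) pT) hα
  obtain ⟨w, hw⟩ := hn
  have hw2 : n = 2*w + 1 := by omega
  -- compute the canonical form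
  have hsq : (1 - θ^M)^2 = (-2) * θ^M := by
    have hthis := theta_pow M
    have hMM : θ^M * θ^M = θ^(2*M) := by rw [← pow_add]; congr 1; ring
    linear_combination hMM + hthis
  have hpow : (1 - θ^M)^n = (-2:AdjoinRoot (QM M))^w * θ^(M*w) * (1 - θ^M) := by
    rw [hw2, pow_add, pow_mul, hsq, mul_pow, pow_one, ← pow_mul]
  have hE2 : (j + M*w) + M < (j + M*w) + 2*M := by omega
  set E1 := j + M*w with hE1def
  set E2 := j + M*w + M with hE2def
  have halpha : AdjoinRoot.mk (QM M) pT
      = ((s * (-2)^w * (-1)^(E1/(2*M)) : ℤ) : AdjoinRoot (QM M)) * θ^(E1 % (2*M))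
        - ((s * (-2)^w * (-1)^(E2/(2*M)) : ℤ) : AdjoinRoot (QM M)) * θ^(E2 % (2*M)) := by
    rw [hsj, hpow]
    rw [show (s : AdjoinRoot (QM M)) * θ^j * ((-2:AdjoinRoot (QM M))^w * θ^(M*w) * (1 - θ^M))
        = (s : AdjoinRoot (QM M)) * (-2)^w * θ^(E1) - (s:AdjoinRoot (QM M)) * (-2)^w * θ^(E2)
        from by rw [hE1def, hE2def, pow_add, pow_add]; ring]
    rw [theta_reduce M hM E1, theta_reduce M hM E2]
    push_cast
    ring
  set c1 : ℤ := s * (-2)^w * (-1)^(E1/(2*M)) with hc1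
  set c2 : ℤ := s * (-2)^w * (-1)^(E2/(2*M)) with hc2
  set r : ℤ[X] := (c1 : ℤ[X]) * X^(E1 % (2*M)) - (c2 : ℤ[X]) * X^(E2 % (2*M)) with hr
  have hmkr : AdjoinRoot.mk (QM M) r
      = ((c1:ℤ) : AdjoinRoot (QM M)) * θ^(E1 % (2*M))
        - ((c2:ℤ) : AdjoinRoot (QM M)) * θ^(E2 % (2*M)) := by
    rw [hr, map_sub, map_mul, map_mul, map_pow, map_pow, AdjoinRoot.mk_X,
      map_intCast, map_intCast]
  have hmk_eq : AdjoinRoot.mk (QM M) pT = AdjoinRoot.mk (QM M) r := by rw [halpha, hmkr]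
  have hdvd2 : QM M ∣ pT - r := (AdjoinRoot.mk_eq_mk (f := QM M)).1 hmk_eq
  have hdeg : (pT - r).degree < (QM M).degree := by
    rw [QM_degree M hM]
    apply lt_of_le_of_lt (degree_sub_le _ _)
    rw [max_lt_iff]
    constructor
    · exact degree_coeff_sum_lt (2*M) (by omega) t
    · rw [hr, show ((c1:ℤ[X])) = C c1 from by simp, show ((c2:ℤ[X])) = C c2 from by simp]
      apply lt_of_le_of_lt (degree_sub_le _ _)
      rw [max_lt_iff]
      constructor
      · apply lt_of_le_of_lt (degree_mul_le _ _)
        calc (C c1).degree + ((X:ℤ[X])^(E1 % (2*M))).degree ≤ 0 + ((E1 % (2*M) : ℕ)) :=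
              add_le_add degree_C_le (le_of_eq (degree_X_pow _))
          _ = ((E1 % (2*M) : ℕ) : WithBot ℕ) := by rw [zero_add]
          _ < ((2*M : ℕ) : WithBot ℕ) := by exact_mod_cast Nat.mod_lt _ (by omega : 0 < 2*M)
      · apply lt_of_le_of_lt (degree_mul_le _ _)
        calc (C c2).degree + ((X:ℤ[X])^(E2 % (2*M))).degree ≤ 0 + ((E2 % (2*M) : ℕ)) :=
              add_le_add degree_C_le (le_of_eq (degree_X_pow _))
          _ = ((E2 % (2*M) : ℕ) : WithBot ℕ) := by rw [zero_add]
          _ < ((2*M : ℕ) : WithBot ℕ) := by exact_mod_cast Nat.mod_lt _ (by omega : 0 < 2*M)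
  have hPr : pT = r := by
    have := eq_zero_of_dvd_of_degree_lt hdvd2 hdeg
    linear_combination this
  have hcoeff_pT : ∀ i, i < 2*M → pT.coeff i = t i := by
    intro i hi
    rw [hpT, Polynomial.finset_sum_coeff]
    rw [Finset.sum_congr rfl (fun v (_ : v ∈ Finset.range (2*M)) => by
      rw [coeff_C_mul, coeff_X_pow, mul_ite, mul_one, mul_zero])]
    rw [Finset.sum_ite_eq (Finset.range (2*M)) i t, if_pos (Finset.mem_range.2 hi)]
  have hne : E1 % (2*M) ≠ E2 % (2*M) := by
    intro heq
    have hmod : E1 ≡ E2 [MOD 2*M] := heq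
    have hdvdM := (Nat.modEq_iff_dvd' (by omega : E1 ≤ E2)).1 hmod
    rw [show E2 - E1 = M from by omega] at hdvdM
    have := Nat.le_of_dvd (by omega) hdvdM
    omega
  have hsgn : ∀ d : ℕ, ((-1:ℤ)^d = 1 ∨ (-1:ℤ)^d = -1) := by
    intro d
    rcases Nat.even_or_odd d with hd | hd
    · left; exact hd.neg_one_pow
    · right; exact hd.neg_one_pow
  have hsig : ∀ d : ℕ, s * (-2:ℤ)^w * (-1)^d = 2^w ∨ s * (-2:ℤ)^w * (-1)^d = -(2^w) := by
    intro d
    have h1 := sign_mul hs (hsgn w)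
    have h2 := sign_mul h1 (hsgn d)
    rcases h2 with h2 | h2
    · left; rw [neg_pow]; linear_combination (2:ℤ)^w * h2
    · right; rw [neg_pow]; linear_combination (2:ℤ)^w * h2
  have hc1v : c1 = 2^w ∨ c1 = -(2^w) := hsig (E1/(2*M))
  have hc2v : c2 = 2^w ∨ c2 = -(2^w) := hsig (E2/(2*M))
  intro i hi
  have hti : t i = r.coeff i := by rw [← hPr]; exact (hcoeff_pT i hi).symm
  rw [hr, show ((c1:ℤ[X])) = C c1 from by simp, show ((c2:ℤ[X])) = C c2 from by simp,
    coeff_sub, coeff_C_mul, coeff_C_mul, coeff_X_pow, coeff_X_pow] at hti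
  rw [show (n-1)/2 = w from by omega]
  by_cases h1 : i = E1 % (2*M)
  · rw [if_pos h1, if_neg (fun h2 : i = E2 % (2*M) => hne (h1.symm.trans h2)),
      mul_one, mul_zero, sub_zero] at hti
    rcases hc1v with hv | hv
    · right; left; exact hti.trans hv
    · right; right; rw [hti, hv]
  · rw [if_neg h1, mul_zero] at hti
    by_cases h2 : i = E2 % (2*M)
    · rw [if_pos h2, mul_one, zero_sub] at hti
      rcases hc2v with hv | hv
      · right; right; rw [hti, hv]
      · right; left; rw [hti, hv]; ring
    · left; rw [if_neg h2, mul_zero, sub_zero] at hti; exact hti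

theorem coeffs_of_abs (κ n : ℕ) (hn : Odd n) (t : ℕ → ℤ)
    (habs : ‖(∑ i ∈ Finset.range (2*2^κ),
        (t i : ℂ) * Complex.exp (2 * Real.pi * Complex.I / ((2^(κ+2) : ℕ) : ℂ))^i)‖
      = (2:ℝ)^((n:ℝ)/2)) :
    ∀ i, i < 2*2^κ → t i = 0 ∨ t i = 2^((n-1)/2) ∨ t i = -2^((n-1)/2) := by
  set M := 2^κ with hMdef
  have hM : 0 < M := Nat.pow_pos (n := κ) (by norm_num)
  set ω : ℂ := Complex.exp (2 * Real.pi * Complex.I / ((2^(κ+2) : ℕ) : ℂ)) with hω_def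
  have hω : IsPrimitiveRoot ω (2^(κ+2)) := Complex.isPrimitiveRoot_exp _ (by positivity)
  have hNM : (2:ℕ)^(κ+2) = 4*M := by rw [hMdef]; ring
  have hω0 : ω ≠ 0 := by
    intro h0
    have := hω.pow_eq_one
    rw [h0] at this
    simp [zero_pow (show (2:ℕ)^(κ+2) ≠ 0 by positivity)] at this
  have hωabs : ‖ω‖ = 1 := by
    have h1 : (‖ω‖)^(2^(κ+2)) = 1 := by
      rw [← norm_pow, hω.pow_eq_one, norm_one]
    rcases lt_trichotomy (‖ω‖) 1 with h | h | h
    · exfalso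
      have := pow_lt_one₀ (norm_nonneg ω) h (show (2:ℕ)^(κ+2) ≠ 0 by positivity)
      rw [h1] at this
      exact lt_irrefl _ this
    · exact h
    · exfalso
      have := one_lt_pow₀ h (show (2:ℕ)^(κ+2) ≠ 0 by positivity)
      rw [h1] at this
      exact lt_irrefl _ this
  have hconj : (starRingEnd ℂ) ω = ω^(4*M-1) := by
    have h1 : ω * (starRingEnd ℂ) ω = 1 := by
      rw [Complex.mul_conj]
      rw [show Complex.normSq ω = ‖ω‖ ^ 2 from (Complex.sq_norm ω).symm, hωabs]
      norm_num
    have h2 : ω * ω^(4*M-1) = 1 := by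
      rw [← pow_succ']
      rw [show 4*M-1+1 = 4*M by omega, ← hNM]
      exact hω.pow_eq_one
    exact mul_left_cancel₀ hω0 (h1.trans h2.symm)
  set z : ℂ := ∑ i ∈ Finset.range (2*M), (t i : ℂ) * ω^i with hz
  have hzz : z * (starRingEnd ℂ) z = 2^n := by
    rw [Complex.mul_conj]
    rw [show Complex.normSq z = ‖z‖ ^ 2 from (Complex.sq_norm z).symm, habs]
    rw [show ((2:ℝ)^((n:ℝ)/2))^2 = (2:ℝ)^(n:ℝ) from by
      rw [← Real.rpow_natCast ((2:ℝ)^((n:ℝ)/2)) 2, ← Real.rpow_mul (by norm_num)]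
      norm_num]
    rw [Real.rpow_natCast]
    norm_cast
  set pT : ℤ[X] := ∑ i ∈ Finset.range (2*M), C (t i) * X^i with hpT
  have haeval_pT : Polynomial.aeval ω pT = z := by
    rw [hpT, map_sum]
    apply Finset.sum_congr rfl
    intro i _
    rw [map_mul, map_pow, Polynomial.aeval_C, Polynomial.aeval_X]
    norm_num
  have haeval_comp : Polynomial.aeval ω (pT.comp (X^(4*M-1))) = (starRingEnd ℂ) z := by
    rw [Polynomial.aeval_comp, map_pow, Polynomial.aeval_X]
    rw [hpT, map_sum, map_sum]
    apply Finset.sum_congr rfl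
    intro i _
    rw [map_mul, map_pow, Polynomial.aeval_C, map_mul, map_pow, ← hconj]
    norm_num
  set D : ℤ[X] := pT * pT.comp (X^(4*M-1)) - 2^n with hD
  have haevalD : Polynomial.aeval ω D = 0 := by
    rw [hD, map_sub, map_mul, haeval_pT, haeval_comp, map_pow, hzz, map_ofNat]
    ring
  have hQMroot : Polynomial.aeval ω (QM M) = 0 := by
    rw [QM_def M, map_add, map_pow, Polynomial.aeval_X, Polynomial.C_1, map_one]
    have h2M : ω^(2*M) = -1 := by
      have hsq' : (ω^(2*M))^2 = 1 := by
        rw [← pow_mul, show 2*M*2 = 2^(κ+2) from by rw [hNM]; ring]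
        exact hω.pow_eq_one
      have hne1 : ω^(2*M) ≠ 1 := by
        apply hω.pow_ne_one_of_pos_of_lt (by omega : 2*M ≠ 0)
        rw [hNM]; omega
      have hfac : (ω^(2*M) - 1) * (ω^(2*M) + 1) = 0 := by
        linear_combination hsq'
      rcases mul_eq_zero.1 hfac with h | h
      · exact absurd (by linear_combination h) hne1
      · linear_combination h
    rw [h2M]
    ring
  have hQdvdD : QM M ∣ D := by
    have hmon := QM_monic M hM
    have hsplit := Polynomial.modByMonic_add_div D (QM M)
    have haevalE : Polynomial.aeval ω (D %ₘ QM M) = 0 := by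
      have h1 : Polynomial.aeval ω (D %ₘ QM M + QM M * (D /ₘ QM M)) = Polynomial.aeval ω D := by
        rw [hsplit]
      rw [map_add, map_mul, hQMroot, zero_mul, add_zero] at h1
      rw [h1, haevalD]
    have hE0 : D %ₘ QM M = 0 := by
      by_contra hne
      have hinj : Function.Injective (algebraMap ℤ ℚ) := fun a b hab => by exact_mod_cast hab
      have hmapne : (D %ₘ QM M).map (algebraMap ℤ ℚ) ≠ 0 := by
        intro h0
        exact hne ((Polynomial.map_eq_zero_iff hinj).1 h0)
      have haevalEQ : Polynomial.aeval ω ((D %ₘ QM M).map (algebraMap ℤ ℚ)) = 0 := by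
        rw [Polynomial.aeval_map_algebraMap]
        exact haevalE
      have hdegle := minpoly.degree_le_of_ne_zero ℚ ω hmapne haevalEQ
      have hdegmin : (minpoly ℚ ω).degree = ((2*M : ℕ) : WithBot ℕ) := by
        rw [← Polynomial.cyclotomic_eq_minpoly_rat hω (by positivity)]
        rw [Polynomial.degree_eq_natDegree (Polynomial.cyclotomic_ne_zero _ ℚ),
          Polynomial.natDegree_cyclotomic,
          Nat.totient_prime_pow Nat.prime_two (by omega : 0 < κ+2)]
        congr 1
        rw [hMdef]
        simp [pow_succ]
        ring
      have hdegE : ((D %ₘ QM M).map (algebraMap ℤ ℚ)).degree < ((2*M : ℕ) : WithBot ℕ) := by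
        rw [Polynomial.degree_map_eq_of_injective hinj]
        rw [← QM_degree M hM]
        exact degree_modByMonic_lt D hmon
      rw [hdegmin] at hdegle
      exact absurd (lt_of_le_of_lt hdegle hdegE) (lt_irrefl _)
    exact (Polynomial.modByMonic_eq_zero_iff_dvd hmon).1 hE0
  have := ntcore κ n hn t (by rw [← hD]; exact hQdvdD)
  exact this

-- ### Combinatorial part
lemma chi_add {R : Type*} [Ring R] (s u : ZMod 2) :
    ((-1:R))^((s+u).val) = (-1)^s.val * (-1)^u.val := by
  have h : ∀ s u : ZMod 2, ((s+u).val = s.val + u.val)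
      ∨ (s.val = 1 ∧ u.val = 1 ∧ (s+u).val = 0) := by decide
  rcases h s u with h | ⟨h1, h2, h3⟩
  · rw [h, pow_add]
  · rw [h1, h2, h3]; norm_num

lemma sum_chi {m : ℕ} (b : Fin m → ZMod 2) :
    (∑ z : Fin m → ZMod 2, ((-1:ℤ))^((bdot b z).val)) = if b = 0 then 2^m else 0 := by
  by_cases hb : b = 0
  · rw [if_pos hb, hb]
    have hz : ∀ z : Fin m → ZMod 2, bdot (0 : Fin m → ZMod 2) z = 0 := by
      intro z; simp [bdot]
    rw [Finset.sum_congr rfl (fun z _ => by rw [hz z])]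
    simp [Finset.card_univ, Fintype.card_fun]
  · rw [if_neg hb]
    have hex : ∃ i₀, b i₀ ≠ 0 := by
      by_contra hall; push_neg at hall; exact hb (funext hall)
    obtain ⟨i₀, hi₀⟩ := hex
    have hone : ∀ s : ZMod 2, s ≠ 0 → s = 1 := by decide
    have hb1 : b i₀ = 1 := hone _ hi₀
    set e : Fin m → ZMod 2 := fun j => if j = i₀ then 1 else 0 with he
    have hkey : ∀ z, bdot b (z + e) = bdot b z + 1 := by
      intro z
      show (∑ i, b i * (z + e) i) = (∑ i, b i * z i) + 1
      have hsplit : ∀ i, b i * (z + e) i = b i * z i + b i * e i := fun i => by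
        simp [Pi.add_apply]; ring
      rw [Finset.sum_congr rfl (fun i _ => hsplit i), Finset.sum_add_distrib]
      congr 1
      rw [Finset.sum_eq_single i₀ (fun i _ hine => by simp [he, hine]) (by simp)]
      simp [he, hb1]
    have hreindex : (∑ z : Fin m → ZMod 2, ((-1:ℤ))^((bdot b (z + e)).val))
        = ∑ z : Fin m → ZMod 2, ((-1:ℤ))^((bdot b z).val) :=
      Fintype.sum_bijective (fun z => z + e) (Equiv.addRight e).bijective _ _ (fun z => rfl)
    have hflip : ∀ z : Fin m → ZMod 2, ((-1:ℤ))^((bdot b (z + e)).val)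
        = -((-1:ℤ))^((bdot b z).val) := by
      intro z
      rw [hkey z, chi_add]
      have : ((1:ZMod 2)).val = 1 := rfl
      rw [this]
      ring
    rw [Finset.sum_congr rfl (fun z _ => hflip z)] at hreindex
    rw [Finset.sum_neg_distrib] at hreindex
    linarith [hreindex]

lemma zmod2_add_eq_zero_iff : ∀ p q : ZMod 2, p + q = 0 ↔ p = q := by decide

lemma walshP_formula {n s : ℕ} (a : ℕ → BF n) (u : Fin n → ZMod 2) (y : Fin s → ZMod 2) :
    walshP (fun x yy => (∑ i : Fin s, a i.val x * yy i) + a s x) u y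
    = 2^s * ∑ x ∈ Finset.univ.filter
        (fun x : Fin n → ZMod 2 => (fun j : Fin s => a j.val x) = y),
        (-1:ℤ)^((a s x + bdot u x).val) := by
  rw [walshP]
  have hinner : ∀ x : Fin n → ZMod 2,
      ∑ z : Fin s → ZMod 2,
        (-1:ℤ)^((((∑ i : Fin s, a i.val x * z i) + a s x) + bdot u x + bdot y z).val)
      = (-1:ℤ)^((a s x + bdot u x).val)
          * (if (fun i : Fin s => a i.val x + y i) = 0 then (2:ℤ)^s else 0) := by
    intro x
    have hexp : ∀ z : Fin s → ZMod 2,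
        ((∑ i : Fin s, a i.val x * z i) + a s x) + bdot u x + bdot y z
        = (a s x + bdot u x) + bdot (fun i => a i.val x + y i) z := by
      intro z
      have h1 : bdot (fun i : Fin s => a i.val x + y i) z
          = (∑ i : Fin s, a i.val x * z i) + bdot y z := by
        show (∑ i, (a i.val x + y i) * z i) = _
        rw [show (bdot y z) = ∑ i, y i * z i from rfl, ← Finset.sum_add_distrib]
        apply Finset.sum_congr rfl; intro i _; ring
      rw [h1]; ring
    rw [Finset.sum_congr rfl (fun z _ => by rw [hexp z, chi_add])]
    rw [← Finset.mul_sum, sum_chi]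
  rw [Finset.sum_congr rfl (fun x _ => hinner x)]
  have hcond : ∀ x : Fin n → ZMod 2,
      ((fun i : Fin s => a i.val x + y i) = 0) ↔ ((fun j : Fin s => a j.val x) = y) := by
    intro x
    constructor
    · intro h
      funext j
      exact (zmod2_add_eq_zero_iff _ _).1 (congrFun h j)
    · intro h
      funext j
      exact (zmod2_add_eq_zero_iff _ _).2 (congrFun h j)
  have hstep : ∀ x : Fin n → ZMod 2,
      (-1:ℤ)^((a s x + bdot u x).val)
        * (if (fun i : Fin s => a i.val x + y i) = 0 then (2:ℤ)^s else 0)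
      = if (fun j : Fin s => a j.val x) = y then (2:ℤ)^s * (-1)^((a s x + bdot u x).val)
        else 0 := by
    intro x
    by_cases hx : (fun j : Fin s => a j.val x) = y
    · rw [if_pos hx, if_pos ((hcond x).2 hx)]; ring
    · rw [if_neg hx, if_neg (fun h => hx ((hcond x).1 h))]; ring
  rw [Finset.sum_congr rfl (fun x _ => hstep x), ← Finset.sum_filter, Finset.mul_sum]

lemma geom_two_sum (k : ℕ) : ∑ j ∈ Finset.range k, 2^j = 2^k - 1 := by
  induction k with
  | zero => rfl
  | succ m ih =>
    rw [Finset.sum_range_succ, ih]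
    have : 0 < 2^m := Nat.pow_pos (n := m) (by norm_num)
    have h2 : (2:ℕ)^(m+1) = 2*2^m := by ring
    omega

lemma gwht_formula {n k : ℕ} (hk : 1 ≤ k) (a : ℕ → BF n) (f : (Fin n → ZMod 2) → ZMod (2^k))
    (hf : coordExpand k a f) (u : Fin n → ZMod 2) :
    gwht f u = ∑ v : Fin (k-1) → ZMod 2,
      ((∑ x ∈ Finset.univ.filter
          (fun x : Fin n → ZMod 2 => (fun j : Fin (k-1) => a j.val x) = v),
          (-1:ℤ)^((a (k-1) x + bdot u x).val) : ℤ) : ℂ)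
        * (Complex.exp (2 * Real.pi * Complex.I / ((2^k : ℕ) : ℂ)))
            ^(∑ j : Fin (k-1), 2^(j:ℕ) * (v j).val) := by
  set ω : ℂ := Complex.exp (2 * Real.pi * Complex.I / ((2^k : ℕ) : ℂ)) with hω_def
  have hω : IsPrimitiveRoot ω (2^k) := Complex.isPrimitiveRoot_exp _ (by positivity)
  -- the value of f x
  have hval : ∀ x, (f x).val = ∑ j ∈ Finset.range k, 2^j * (a j x).val := by
    intro x
    have h1 : f x = ((∑ j ∈ Finset.range k, 2^j * (a j x).val : ℕ) : ZMod (2^k)) := by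
      rw [hf x]
      push_cast
      apply Finset.sum_congr rfl; intro j _
      push_cast
      ring
    rw [h1, ZMod.val_natCast]
    apply Nat.mod_eq_of_lt
    have hle : ∑ j ∈ Finset.range k, 2^j * (a j x).val ≤ ∑ j ∈ Finset.range k, 2^j := by
      apply Finset.sum_le_sum
      intro j _
      have hv2 : (a j x).val < 2 := ZMod.val_lt _
      have : (a j x).val ≤ 1 := by omega
      calc 2^j * (a j x).val ≤ 2^j * 1 := Nat.mul_le_mul_left _ this
        _ = 2^j := by ring
    rw [geom_two_sum] at hle
    have : 0 < 2^k := Nat.pow_pos (n := k) (by norm_num)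
    omega
  have hsplitval : ∀ x, (f x).val
      = (∑ j ∈ Finset.range (k-1), 2^j * (a j x).val) + 2^(k-1) * (a (k-1) x).val := by
    intro x
    have h1 := Finset.sum_range_succ (fun j => 2^j * (a j x).val) (k-1)
    rw [show (k-1)+1 = k from by omega] at h1
    rw [hval x, h1]
  have hω2 : ω^(2^(k-1)) = -1 := by
    have hsq' : (ω^(2^(k-1)))^2 = 1 := by
      rw [← pow_mul, show 2^(k-1)*2 = 2^k from by
        rw [← pow_succ]; congr 1; omega]
      exact hω.pow_eq_one
    have hne1 : ω^(2^(k-1)) ≠ 1 := by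
      apply hω.pow_ne_one_of_pos_of_lt (by positivity)
      exact Nat.pow_lt_pow_right (by norm_num) (by omega)
    have hfac : (ω^(2^(k-1)) - 1) * (ω^(2^(k-1)) + 1) = 0 := by linear_combination hsq'
    rcases mul_eq_zero.1 hfac with h | h
    · exact absurd (by linear_combination h) hne1
    · linear_combination h
  have hterm : ∀ x : Fin n → ZMod 2,
      ω^((f x).val) * (-1:ℂ)^((bdot u x).val)
      = ω^(∑ j ∈ Finset.range (k-1), 2^j * (a j x).val)
          * (-1:ℂ)^((a (k-1) x + bdot u x).val) := by
    intro x
    rw [hsplitval x, pow_add, pow_mul, hω2, chi_add]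
    ring
  rw [gwht]
  rw [Finset.sum_congr rfl (fun x _ => hterm x)]
  rw [← Finset.sum_fiberwise Finset.univ
    (fun x : Fin n → ZMod 2 => (fun j : Fin (k-1) => a j.val x))
    (fun x => ω^(∑ j ∈ Finset.range (k-1), 2^j * (a j x).val)
      * (-1:ℂ)^((a (k-1) x + bdot u x).val))]
  apply Finset.sum_congr rfl
  intro v _
  have hfiber : ∀ x ∈ Finset.univ.filter
      (fun x : Fin n → ZMod 2 => (fun j : Fin (k-1) => a j.val x) = v),
      ω^(∑ j ∈ Finset.range (k-1), 2^j * (a j x).val) * (-1:ℂ)^((a (k-1) x + bdot u x).val)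
      = ω^(∑ j : Fin (k-1), 2^(j:ℕ) * (v j).val) * (-1:ℂ)^((a (k-1) x + bdot u x).val) := by
    intro x hx
    have hxv := (Finset.mem_filter.1 hx).2
    have hsum : ∑ j ∈ Finset.range (k-1), 2^j * (a j x).val
        = ∑ j : Fin (k-1), 2^(j:ℕ) * (v j).val := by
      rw [← Fin.sum_univ_eq_sum_range (fun j => 2^j * (a j x).val) (k-1)]
      apply Finset.sum_congr rfl
      intro j _
      rw [← congrFun hxv j]
    rw [hsum]
  rw [Finset.sum_congr rfl hfiber]
  rw [Finset.sum_congr rfl (fun x (_ : x ∈ Finset.univ.filter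
      (fun x : Fin n → ZMod 2 => (fun j : Fin (k-1) => a j.val x) = v)) =>
    mul_comm (ω^(∑ j : Fin (k-1), 2^(j:ℕ) * (v j).val))
      ((-1:ℂ)^((a (k-1) x + bdot u x).val))), ← Finset.sum_mul]
  congr 1
  push_cast
  rfl
theorem coeffs_of_abs' (k n : ℕ) (hk : 2 ≤ k) (hn : Odd n) (t : ℕ → ℤ)
    (habs : ‖(∑ i ∈ Finset.range (2^(k-1)),
        (t i : ℂ) * (Complex.exp (2 * Real.pi * Complex.I / ((2^k : ℕ) : ℂ)))^i)‖
      = (2:ℝ)^((n:ℝ)/2)) :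
    ∀ i, i < 2^(k-1) → t i = 0 ∨ t i = 2^((n-1)/2) ∨ t i = -2^((n-1)/2) := by
  have hkk : k = (k-2)+2 := by omega
  have h2 : 2^(k-1) = 2*2^(k-2) := by
    rw [show k-1 = (k-2)+1 from by omega]; ring
  intro i hi
  apply coeffs_of_abs (k-2) n hn t ?_ i (by omega)
  rw [← h2, ← hkk]
  exact habs

def Tdef (n k : ℕ) (a : ℕ → BF n) (u : Fin n → ZMod 2) (v : Fin (k-1) → ZMod 2) : ℤ :=
  ∑ x ∈ Finset.univ.filter
    (fun x : Fin n → ZMod 2 => (fun j : Fin (k-1) => a j.val x) = v),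
    (-1:ℤ)^((a (k-1) x + bdot u x).val)

noncomputable def tdef (n k : ℕ) (a : ℕ → BF n) (u : Fin n → ZMod 2) (i : ℕ) : ℤ :=
  if h : i < 2^(k-1) then
    Tdef n k a u ((finFunctionFinEquiv.symm ⟨i, h⟩ : Fin (k-1) → Fin 2)) else 0

lemma tdef_apply (n k : ℕ) (a : ℕ → BF n) (u : Fin n → ZMod 2) (v : Fin (k-1) → ZMod 2) :
    tdef n k a u ((finFunctionFinEquiv (v : Fin (k-1) → Fin 2) : Fin (2^(k-1))) : ℕ)
      = Tdef n k a u v := by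
  simp only [tdef]
  rw [dif_pos (finFunctionFinEquiv (v : Fin (k-1) → Fin 2)).isLt]
  congr 1
  rw [Fin.eta]; exact finFunctionFinEquiv.symm_apply_apply (v : Fin (k-1) → Fin 2)

lemma walshP_formula' {n k : ℕ} (a : ℕ → BF n) (u : Fin n → ZMod 2)
    (y : Fin (k-1) → ZMod 2) :
    walshP (fun x yy => (∑ i : Fin (k-1), a i.val x * yy i) + a (k-1) x) u y
      = 2^(k-1) * Tdef n k a u y :=
  walshP_formula a u y

lemma gwht_formula' {n k : ℕ} (hk : 1 ≤ k) (a : ℕ → BF n)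
    (f : (Fin n → ZMod 2) → ZMod (2^k)) (hf : coordExpand k a f) (u : Fin n → ZMod 2) :
    gwht f u = ∑ v : Fin (k-1) → ZMod 2,
      ((Tdef n k a u v : ℤ) : ℂ)
        * (Complex.exp (2 * Real.pi * Complex.I / ((2^k : ℕ) : ℂ)))
            ^(∑ j : Fin (k-1), 2^(j:ℕ) * (v j).val) :=
  gwht_formula hk a f hf u

lemma gwht_reindex {n k : ℕ} (hk : 1 ≤ k) (a : ℕ → BF n)
    (f : (Fin n → ZMod 2) → ZMod (2^k)) (hf : coordExpand k a f) (u : Fin n → ZMod 2) :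
    gwht f u = ∑ i ∈ Finset.range (2^(k-1)), (tdef n k a u i : ℂ)
      * (Complex.exp (2 * Real.pi * Complex.I / ((2^k : ℕ) : ℂ)))^i := by
  rw [gwht_formula' hk a f hf u]
  set ω : ℂ := Complex.exp (2 * Real.pi * Complex.I / ((2^k : ℕ) : ℂ)) with hω_def
  have hcnum : ∀ v : Fin (k-1) → ZMod 2,
      (∑ j : Fin (k-1), 2^(j:ℕ) * (v j).val)
        = ((finFunctionFinEquiv (v : Fin (k-1) → Fin 2) : Fin (2^(k-1))) : ℕ) := by
    intro v
    refine Eq.trans ?_ (finFunctionFinEquiv_apply (v : Fin (k-1) → Fin 2)).symm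
    apply Finset.sum_congr rfl; intro j _
    exact Nat.mul_comm _ _
  have h1 : ∀ v : Fin (k-1) → ZMod 2,
      ((Tdef n k a u v : ℤ) : ℂ) * ω^(∑ j : Fin (k-1), 2^(j:ℕ) * (v j).val)
      = (fun i : Fin (2^(k-1)) => ((tdef n k a u (i:ℕ) : ℤ) : ℂ) * ω^(i:ℕ))
          ((finFunctionFinEquiv (v : Fin (k-1) → Fin 2) : Fin (2^(k-1)))) := by
    intro v
    simp only
    rw [hcnum v, tdef_apply]
  rw [Fintype.sum_bijective
    (fun v : Fin (k-1) → ZMod 2 =>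
      (finFunctionFinEquiv (v : Fin (k-1) → Fin 2) : Fin (2^(k-1))))
    finFunctionFinEquiv.bijective _
    (fun i : Fin (2^(k-1)) => ((tdef n k a u (i:ℕ) : ℤ) : ℂ) * ω^(i:ℕ)) h1]
  rw [← Fin.sum_univ_eq_sum_range (fun i => (tdef n k a u i : ℂ) * ω^i) (2^(k-1))]

end GMP

/-- Proposition 8: the generalized Gray map of a gbent function in `𝒢ℬ_n^{2^k}`, `n` odd,
is `(k-2)`-plateaued: `W_{ψ(f)} ∈ {0, ±2^{(n+1)/2 + k - 2}}`. -/
theorem gray_map_of_gbent_odd_plateaued (n k : ℕ) (hn : Odd n) (hk : 3 ≤ k) (a : ℕ → BF n)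
    (f : (Fin n → ZMod 2) → ZMod (2 ^ k)) (hf : coordExpand k a f) (hgb : IsGbent f) :
    ∀ (u : Fin n → ZMod 2) (y : Fin (k - 1) → ZMod 2),
      walshP (fun x y => (∑ i : Fin (k - 1), a i.val x * y i) + a (k - 1) x) u y = 0 ∨
        walshP (fun x y => (∑ i : Fin (k - 1), a i.val x * y i) + a (k - 1) x) u y =
          2 ^ ((n + 1) / 2 + k - 2) ∨
        walshP (fun x y => (∑ i : Fin (k - 1), a i.val x * y i) + a (k - 1) x) u y =
          -2 ^ ((n + 1) / 2 + k - 2) := by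
  intro u y
  have hk1 : 1 ≤ k := by omega
  obtain ⟨w, hwodd⟩ := hn
  have hwn : (n-1)/2 = w := by omega
  have hexp : (n+1)/2 + k - 2 = (k-1) + w := by omega
  have hn' : Odd n := ⟨w, hwodd⟩
  have hgw := GMP.gwht_reindex hk1 a f hf u
  have habs : ‖(∑ i ∈ Finset.range (2^(k-1)), (GMP.tdef n k a u i : ℂ)
      * (Complex.exp (2 * Real.pi * Complex.I / ((2^k : ℕ) : ℂ)))^i)‖
      = (2:ℝ)^((n:ℝ)/2) := by
    rw [← hgw]; exact hgb u
  have hti := GMP.coeffs_of_abs' k n (by omega) hn' (GMP.tdef n k a u) habs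
  have hTy := GMP.walshP_formula' (k := k) a u y
  have hval := hti
    ((finFunctionFinEquiv (y : Fin (k-1) → Fin 2) : Fin (2^(k-1))) : ℕ)
    (finFunctionFinEquiv (y : Fin (k-1) → Fin 2)).isLt
  rw [GMP.tdef_apply] at hval
  rcases hval with h0 | hp | hm
  · left; rw [hTy, h0]; ring
  · right; left
    rw [hTy, hp, hwn, hexp, pow_add]
  · right; right
    rw [hTy, hm, hwn, hexp, pow_add]
    ring
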